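/- Let H be a Hopf algebra, C a coalgebra, and J : C → H a coalgebra homomorphism. Then the map δ : C → C ⊗ H defined by δ(c) = c_{(2)} ⊗ S(J(c_{(1)})) J(c_{(3)}) is a coflat Hopf coaction of H on C. -/

import Mathlib

open TensorProduct LinearMap Coalgebra

/-- A coflat Hopf coaction of a Hopf algebra `H` on a coalgebra `C`. -/
structure IsCoflatCoaction (R C H : Type) [CommRing R]
    [AddCommGroup C] [Module R C] [Coalgebra R C]
    [Ring H] [HopfAlgebra R H]
    (δ : C →ₗ[R] C ⊗[R] H) : Prop where
  coassoc : (TensorProduct.assoc R C H H).toLinearMap ∘ₗ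
      (TensorProduct.map δ (LinearMap.id : H →ₗ[R] H)) ∘ₗ δ
      = (TensorProduct.map (LinearMap.id : C →ₗ[R] C) (Coalgebra.comul (R := R))) ∘ₗ δ
  counitary : (TensorProduct.rid R C).toLinearMap ∘ₗ
      (TensorProduct.map (LinearMap.id : C →ₗ[R] C) (Coalgebra.counit (R := R))) ∘ₗ δ
      = LinearMap.id
  coflat_mul : (TensorProduct.map (LinearMap.id : (C ⊗[R] C) →ₗ[R] C ⊗[R] C)
        (LinearMap.mul' R H)) ∘ₗ
      (TensorProduct.tensorTensorTensorComm R C H C H).toLinearMap ∘ₗ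
      (TensorProduct.map δ δ) ∘ₗ Coalgebra.comul
      = (TensorProduct.map (Coalgebra.comul (R := R)) (LinearMap.id : H →ₗ[R] H)) ∘ₗ δ
  coflat_counit : (LinearMap.mul' R R) ∘ₗ
      (TensorProduct.map (Coalgebra.counit (R := R)) (Coalgebra.counit (R := R))) ∘ₗ δ
      = Coalgebra.counit

/-- The inner coaction `δ c = c₍₂₎ ⊗ S(J(c₍₁₎)) J(c₍₃₎)` associated to a coalgebra
homomorphism `J : C → H`. -/
noncomputable def innerCoaction (R C H : Type) [CommRing R]
    [AddCommGroup C] [Module R C] [Coalgebra R C] [Ring H] [HopfAlgebra R H]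
    (J : C →ₗc[R] H) : C →ₗ[R] C ⊗[R] H :=
  (TensorProduct.map (LinearMap.id : C →ₗ[R] C) (LinearMap.mul' R H)) ∘ₗ
    (TensorProduct.assoc R C H H).toLinearMap ∘ₗ
    (TensorProduct.map
      ((TensorProduct.comm R H C).toLinearMap ∘ₗ
        TensorProduct.map ((HopfAlgebra.antipode (R := R)) ∘ₗ J.toLinearMap)
          (LinearMap.id : C →ₗ[R] C))
      J.toLinearMap) ∘ₗ
    (TensorProduct.map (Coalgebra.comul (R := R)) (LinearMap.id : C →ₗ[R] C)) ∘ₗ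
    Coalgebra.comul


section Convolution
variable {R : Type} [CommRing R]
variable {C : Type} [AddCommGroup C] [Module R C] [Coalgebra R C]
variable {A : Type} [Ring A] [Algebra R A]

/-- Convolution product of linear maps from a coalgebra to an algebra. -/
noncomputable def conv (f g : C →ₗ[R] A) : C →ₗ[R] A :=
  LinearMap.mul' R A ∘ₗ TensorProduct.map f g ∘ₗ Coalgebra.comul

/-- The unit of the convolution algebra. -/
noncomputable def convUnit : C →ₗ[R] A := Algebra.linearMap R A ∘ₗ Coalgebra.counit

theorem conv_unit_left (f : C →ₗ[R] A) : conv convUnit f = f := by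
  have h1 : (TensorProduct.map ((Algebra.linearMap R A) ∘ₗ (counit : C →ₗ[R] R)) f)
      = TensorProduct.map (Algebra.linearMap R A) f ∘ₗ (counit (R := R) (A := C)).rTensor C := by
    rw [LinearMap.rTensor, ← TensorProduct.map_comp]; simp
  unfold conv convUnit
  rw [h1, LinearMap.comp_assoc, Coalgebra.rTensor_counit_comp_comul]
  ext c
  simp [Algebra.smul_def]

theorem conv_unit_right (f : C →ₗ[R] A) : conv f convUnit = f := by
  have h1 : (TensorProduct.map f ((Algebra.linearMap R A) ∘ₗ (counit : C →ₗ[R] R)))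
      = TensorProduct.map f (Algebra.linearMap R A) ∘ₗ (counit (R := R) (A := C)).lTensor C := by
    rw [LinearMap.lTensor, ← TensorProduct.map_comp]; simp
  unfold conv convUnit
  rw [h1, LinearMap.comp_assoc, Coalgebra.lTensor_counit_comp_comul]
  ext c
  simp [Algebra.smul_def, Algebra.commutes]

end Convolution

section ConvAssoc
variable {R : Type} [CommRing R]
variable {C : Type} [AddCommGroup C] [Module R C] [Coalgebra R C]
variable {A : Type} [Ring A] [Algebra R A]

theorem mul'_assoc_map : mul' R A ∘ₗ TensorProduct.map (mul' R A) (.id)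
    = mul' R A ∘ₗ TensorProduct.map (.id) (mul' R A) ∘ₗ (TensorProduct.assoc R A A A).toLinearMap := by
  apply TensorProduct.ext_threefold; intros; simp [mul_assoc]

theorem conv_assoc (f g h : C →ₗ[R] A) : conv (conv f g) h = conv f (conv g h) := by
  have e1 : TensorProduct.map (mul' R A ∘ₗ TensorProduct.map f g ∘ₗ comul (R := R)) h
      = TensorProduct.map (mul' R A) .id ∘ₗ TensorProduct.map (TensorProduct.map f g) h
        ∘ₗ TensorProduct.map (comul (R := R)) .id := by
    rw [← TensorProduct.map_comp, ← TensorProduct.map_comp]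
    simp
  have e2 : TensorProduct.map f (mul' R A ∘ₗ TensorProduct.map g h ∘ₗ comul (R := R))
      = TensorProduct.map .id (mul' R A) ∘ₗ TensorProduct.map f (TensorProduct.map g h)
        ∘ₗ TensorProduct.map .id (comul (R := R)) := by
    rw [← TensorProduct.map_comp, ← TensorProduct.map_comp]
    simp
  ext c
  simp only [conv, LinearMap.comp_apply]
  rw [e1, e2]
  simp only [LinearMap.comp_apply]
  have hc : TensorProduct.map (comul (R := R)) (.id : C →ₗ[R] C) (comul c)
      = (TensorProduct.assoc R C C C).symm
          (TensorProduct.map (.id : C →ₗ[R] C) (comul (R := R)) (comul c)) := by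
    have := Coalgebra.coassoc_symm_apply (R := R) c
    simpa [LinearMap.lTensor, LinearMap.rTensor] using this.symm
  rw [hc, TensorProduct.map_map_assoc_symm]
  have := LinearMap.congr_fun (mul'_assoc_map (R := R) (A := A))
    ((TensorProduct.assoc R A A A).symm
      (TensorProduct.map f (TensorProduct.map g h)
        (TensorProduct.map (.id : C →ₗ[R] C) (comul (R := R)) (comul c))))
  simp only [LinearMap.comp_apply, LinearEquiv.coe_coe, LinearEquiv.apply_symm_apply] at this
  rw [this]

end ConvAssoc

section Antipode
variable {R : Type} [CommRing R]
variable {H : Type} [Ring H] [HopfAlgebra R H]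

local notation "S" => (HopfAlgebra.antipode (R := R) (A := H))

theorem counit_antipode : (counit (R := R) (A := H)) ∘ₗ S = counit := by
  ext h
  have h1 := congrArg (counit (R := R)) (HopfAlgebra.sum_antipode_mul_eq_algebraMap_counit (R := R) (ℛ R h))
  simp only [map_sum, Bialgebra.counit_mul, Bialgebra.counit_algebraMap] at h1
  have h3 := congrArg (TensorProduct.rid R H) (Coalgebra.sum_tmul_counit_eq (ℛ R h))
  simp only [map_sum, TensorProduct.rid_tmul, one_smul] at h3
  calc counit (R := R) (S h) = counit (R := R) (S (∑ i ∈ (ℛ R h).index,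
        counit (R := R) ((ℛ R h).right i) • (ℛ R h).left i)) := by rw [h3]
  _ = ∑ i ∈ (ℛ R h).index,
        counit (R := R) (S ((ℛ R h).left i)) * counit (R := R) ((ℛ R h).right i) := by
      simp [map_sum, mul_comm]
  _ = counit (R := R) h := h1

theorem conv_antipode_comul_comul :
    conv ((comul (R := R) (A := H)) ∘ₗ S) (comul (R := R) (A := H)) = convUnit := by
  have e4 : mul' R (H ⊗[R] H) ∘ₗ TensorProduct.map (comul (R := R) (A := H)) comul
      = comul ∘ₗ mul' R H := by
    apply TensorProduct.ext'
    intro x y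
    simp [Bialgebra.comul_mul]
  have e0 : TensorProduct.map ((comul (R := R) (A := H)) ∘ₗ S) comul
      = TensorProduct.map (comul (R := R) (A := H)) (comul (R := R) (A := H))
        ∘ₗ TensorProduct.map S (.id : H →ₗ[R] H) := by
    rw [← TensorProduct.map_comp]; simp
  ext h
  simp only [conv, convUnit, LinearMap.comp_apply]
  rw [e0, LinearMap.comp_apply]
  have e4' := LinearMap.congr_fun e4 (TensorProduct.map S (.id : H →ₗ[R] H) (comul h))
  simp only [LinearMap.comp_apply] at e4'
  rw [e4']
  have : TensorProduct.map S (.id : H →ₗ[R] H) (comul h)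
      = (HopfAlgebra.antipode (R := R) (A := H)).rTensor H (comul h) := rfl
  simp only [LinearMap.comp_apply, this, HopfAlgebra.mul_antipode_rTensor_comul_apply,
    Bialgebra.comul_algebraMap, Algebra.linearMap_apply]

theorem conv_comul_antipode_swap :
    conv (comul (R := R) (A := H))
      (TensorProduct.map S S ∘ₗ (TensorProduct.comm R H H).toLinearMap ∘ₗ comul)
    = convUnit := by
  set mkH := TensorProduct.mk R H H with hmkH
  set V : H →ₗ[R] H ⊗[R] H := (mkH 1) ∘ₗ S with hV
  set W : H →ₗ[R] H ⊗[R] H := (mkH.flip 1) ∘ₗ S with hW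
  have E1 : mul' R (H ⊗[R] H) ∘ₗ
        TensorProduct.map (comul (R := R) (A := H))
          (TensorProduct.map S S ∘ₗ (TensorProduct.comm R H H).toLinearMap) ∘ₗ
        (TensorProduct.assoc R H H H).toLinearMap
      = mul' R (H ⊗[R] H) ∘ₗ
        TensorProduct.map (mul' R (H ⊗[R] H) ∘ₗ TensorProduct.map (comul (R := R) (A := H)) V)
          W := by
    apply TensorProduct.ext_threefold
    intro x y z
    simp only [LinearMap.comp_apply, LinearEquiv.coe_coe, TensorProduct.assoc_tmul,
      TensorProduct.map_tmul, TensorProduct.comm_tmul, LinearMap.mul'_apply, hV, hW,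
      TensorProduct.mk_apply, LinearMap.flip_apply, LinearMap.id_coe, id_eq]
    rw [mul_assoc]
    simp only [hmkH, TensorProduct.mk_apply]
    rw [Algebra.TensorProduct.tmul_mul_tmul, one_mul, mul_one]
  have E2b : mul' R (H ⊗[R] H) ∘ₗ
        TensorProduct.map (.id : H ⊗[R] H →ₗ[R] H ⊗[R] H) ((mkH 1) ∘ₗ S)
      = LinearMap.lTensor H (mul' R H ∘ₗ LinearMap.lTensor H S) ∘ₗ
        (TensorProduct.assoc R H H H).toLinearMap := by
    apply TensorProduct.ext_threefold
    intro a b y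
    simp [Algebra.TensorProduct.tmul_mul_tmul, hmkH]
  have E2 : (mul' R (H ⊗[R] H) ∘ₗ TensorProduct.map (comul (R := R) (A := H)) V) ∘ₗ comul
      = mkH.flip 1 := by
    ext x
    have s1 : TensorProduct.map (comul (R := R) (A := H)) V
        = TensorProduct.map (.id : H ⊗[R] H →ₗ[R] H ⊗[R] H) ((mkH 1) ∘ₗ S) ∘ₗ
          (comul (R := R) (A := H)).rTensor H := by
      rw [LinearMap.rTensor, ← TensorProduct.map_comp]; simp [hV]
    simp only [LinearMap.comp_apply, s1, LinearMap.flip_apply]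
    have h2b := LinearMap.congr_fun E2b ((comul (R := R) (A := H)).rTensor H (comul x))
    simp only [LinearMap.comp_apply, LinearEquiv.coe_coe] at h2b
    rw [h2b, Coalgebra.coassoc_apply]
    have fuse := LinearMap.congr_fun
      ((LinearMap.lTensor_comp H (mul' R H ∘ₗ LinearMap.lTensor H S)
        (comul (R := R) (A := H))).symm) (comul x)
    simp only [LinearMap.comp_apply] at fuse
    rw [fuse]
    have ax : mul' R H ∘ₗ LinearMap.lTensor H S ∘ₗ comul
        = Algebra.linearMap R H ∘ₗ counit := HopfAlgebra.mul_antipode_lTensor_comul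
    have : (mul' R H ∘ₗ LinearMap.lTensor H S) ∘ₗ (comul (R := R) (A := H))
        = Algebra.linearMap R H ∘ₗ counit := by rw [LinearMap.comp_assoc, ax]
    rw [this]
    have fuse2 := LinearMap.congr_fun
      ((LinearMap.lTensor_comp H (Algebra.linearMap R H) (counit (R := R) (A := H))).symm)
      (comul x)
    simp only [LinearMap.comp_apply] at fuse2
    rw [← fuse2, Coalgebra.lTensor_counit_comul]
    simp [hmkH]
  have E3 : mul' R (H ⊗[R] H) ∘ₗ TensorProduct.map (mkH.flip 1) W
      = (mkH.flip 1) ∘ₗ mul' R H ∘ₗ LinearMap.lTensor H S := by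
    apply TensorProduct.ext'
    intro x z
    simp [Algebra.TensorProduct.tmul_mul_tmul, hmkH, hW]
  -- main computation
  ext h
  simp only [conv, convUnit, LinearMap.comp_apply]
  have r1 : TensorProduct.map (comul (R := R) (A := H))
        (TensorProduct.map S S ∘ₗ (TensorProduct.comm R H H).toLinearMap ∘ₗ comul)
      = TensorProduct.map (comul (R := R) (A := H))
          (TensorProduct.map S S ∘ₗ (TensorProduct.comm R H H).toLinearMap) ∘ₗ
        (comul (R := R) (A := H)).lTensor H := by
    rw [LinearMap.lTensor, ← TensorProduct.map_comp]
    simp [LinearMap.comp_assoc]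
  rw [r1, LinearMap.comp_apply, ← Coalgebra.coassoc_apply]
  have r3 := LinearMap.congr_fun E1 ((comul (R := R) (A := H)).rTensor H (comul h))
  simp only [LinearMap.comp_apply, LinearEquiv.coe_coe] at r3
  rw [r3]
  have fusion : TensorProduct.map
        (mul' R (H ⊗[R] H) ∘ₗ TensorProduct.map (comul (R := R) (A := H)) V) W ∘ₗ
        (comul (R := R) (A := H)).rTensor H
      = TensorProduct.map
          ((mul' R (H ⊗[R] H) ∘ₗ TensorProduct.map (comul (R := R) (A := H)) V) ∘ₗ comul) W := by
    rw [LinearMap.rTensor, ← TensorProduct.map_comp]; simp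
  have r4 := LinearMap.congr_fun fusion (comul h)
  simp only [LinearMap.comp_apply] at r4
  rw [r4, E2]
  have r5 := LinearMap.congr_fun E3 (comul h)
  simp only [LinearMap.comp_apply] at r5
  rw [r5, HopfAlgebra.mul_antipode_lTensor_comul_apply]
  simp [hmkH, Algebra.TensorProduct.algebraMap_apply, Algebra.TensorProduct.one_def]

theorem comul_antipode :
    (comul (R := R) (A := H)) ∘ₗ S
    = TensorProduct.map S S ∘ₗ (TensorProduct.comm R H H).toLinearMap ∘ₗ comul := by
  calc (comul (R := R) (A := H)) ∘ₗ S
      = conv ((comul (R := R) (A := H)) ∘ₗ S) convUnit := (conv_unit_right _).symm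
    _ = conv ((comul (R := R) (A := H)) ∘ₗ S)
        (conv (comul (R := R) (A := H))
          (TensorProduct.map S S ∘ₗ (TensorProduct.comm R H H).toLinearMap ∘ₗ comul)) := by
        rw [conv_comul_antipode_swap]
    _ = conv (conv ((comul (R := R) (A := H)) ∘ₗ S) (comul (R := R) (A := H)))
        (TensorProduct.map S S ∘ₗ (TensorProduct.comm R H H).toLinearMap ∘ₗ comul) :=
        (conv_assoc _ _ _).symm
    _ = conv convUnit
        (TensorProduct.map S S ∘ₗ (TensorProduct.comm R H H).toLinearMap ∘ₗ comul) := by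
        rw [conv_antipode_comul_comul]
    _ = TensorProduct.map S S ∘ₗ (TensorProduct.comm R H H).toLinearMap ∘ₗ comul :=
        conv_unit_left _

end Antipode


section Coaction
variable {R : Type} [CommRing R]
variable {C : Type} [AddCommGroup C] [Module R C] [Coalgebra R C]
variable {H : Type} [Ring H] [HopfAlgebra R H]
variable (J : C →ₗc[R] H)

local notation "S" => (HopfAlgebra.antipode (R := R) (A := H))

/-- The antipode composed with `J`. -/
noncomputable def Kmap : C →ₗ[R] H := S ∘ₗ J.toLinearMap

/-- The comul-free part of the inner coaction. -/
noncomputable def gOne : (C ⊗[R] C) ⊗[R] C →ₗ[R] C ⊗[R] H :=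
  (TensorProduct.map (.id : C →ₗ[R] C) (mul' R H)) ∘ₗ
    (TensorProduct.assoc R C H H).toLinearMap ∘ₗ
    (TensorProduct.map
      ((TensorProduct.comm R H C).toLinearMap ∘ₗ TensorProduct.map (Kmap J) (.id : C →ₗ[R] C))
      J.toLinearMap)

/-- The twofold comultiplication. -/
noncomputable def DThree (R C : Type) [CommRing R] [AddCommGroup C] [Module R C]
    [Coalgebra R C] : C →ₗ[R] (C ⊗[R] C) ⊗[R] C :=
  (comul (R := R) (A := C)).rTensor C ∘ₗ comul

theorem innerCoaction_eq :
    innerCoaction R C H J = gOne J ∘ₗ DThree R C := by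
  rfl

theorem counit_Kmap : ∀ c : C, counit (R := R) (Kmap J c) = counit (R := R) c := by
  intro c
  have h1 := LinearMap.congr_fun (counit_antipode (R := R) (H := H)) (J c)
  have h2 := CoalgHomClass.counit_comp_apply (R := R) J c
  simp only [LinearMap.comp_apply] at h1
  simp [Kmap, h1, h2]

theorem counit_J : ∀ c : C, counit (R := R) (J c) = counit (R := R) c := fun c =>
  CoalgHomClass.counit_comp_apply (R := R) J c

/-- Left-nested fivefold comultiplication. -/
noncomputable def DFive (R C : Type) [CommRing R] [AddCommGroup C] [Module R C]
    [Coalgebra R C] : C →ₗ[R] (((C ⊗[R] C) ⊗[R] C) ⊗[R] C) ⊗[R] C :=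
  ((DThree R C).rTensor C).rTensor C ∘ₗ DThree R C

theorem mov_gen {W : Type} [AddCommGroup W] [Module R W] (f : C →ₗ[R] W) :
    TensorProduct.map f (comul (R := R) (A := C)) ∘ₗ comul
      = (TensorProduct.assoc R W C C).toLinearMap ∘ₗ (TensorProduct.map f
          (.id : C →ₗ[R] C)).rTensor C ∘ₗ DThree R C := by
  ext c
  simp only [LinearMap.comp_apply, LinearEquiv.coe_coe]
  have e1 : TensorProduct.map f (comul (R := R) (A := C))
      = TensorProduct.map f (.id : C ⊗[R] C →ₗ[R] C ⊗[R] C) ∘ₗ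
        (comul (R := R) (A := C)).lTensor C := by
    rw [LinearMap.lTensor, ← TensorProduct.map_comp]; simp
  rw [e1, LinearMap.comp_apply, ← Coalgebra.coassoc_apply]
  have e2 := TensorProduct.map_map_assoc f (.id : C →ₗ[R] C) (.id : C →ₗ[R] C)
    ((comul (R := R) (A := C)).rTensor C (comul c))
  simp only [TensorProduct.map_id] at e2
  rw [e2]
  rfl

theorem TR_eq : TensorProduct.map (DThree R C) (comul (R := R) (A := C)) ∘ₗ comul
    = (TensorProduct.assoc R ((C ⊗[R] C) ⊗[R] C) C C).toLinearMap ∘ₗ DFive R C := by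
  rw [mov_gen (DThree R C)]
  rfl

theorem FC_eq : TensorProduct.map (.id : C →ₗ[R] C) (DThree R C) ∘ₗ comul
    = (TensorProduct.assoc R C (C ⊗[R] C) C).toLinearMap ∘ₗ
      ((TensorProduct.assoc R C C C).toLinearMap).rTensor C ∘ₗ
      (DThree R C).rTensor C ∘ₗ comul := by
  ext c
  simp only [LinearMap.comp_apply, LinearEquiv.coe_coe]
  -- LHS = map id (rTensor Δ) (map id Δ (Δ c))
  have e1 : TensorProduct.map (.id : C →ₗ[R] C) (DThree R C)
      = ((comul (R := R) (A := C)).rTensor C).lTensor C ∘ₗ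
        (comul (R := R) (A := C)).lTensor C := by
    rw [DThree, ← LinearMap.lTensor_comp]
    rfl
  rw [e1, LinearMap.comp_apply, ← Coalgebra.coassoc_apply]
  -- now : rTensor(Δ).lTensor applied to assoc (rTensor Δ (Δ c))
  have e2 := TensorProduct.map_map_assoc (.id : C →ₗ[R] C)
    (comul (R := R) (A := C)) (.id : C →ₗ[R] C)
    ((comul (R := R) (A := C)).rTensor C (comul c))
  have e2' : ((comul (R := R) (A := C)).rTensor C).lTensor C
        ((TensorProduct.assoc R C C C) ((comul (R := R) (A := C)).rTensor C (comul c)))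
      = (TensorProduct.assoc R C (C ⊗[R] C) C)
        ((TensorProduct.map (.id : C →ₗ[R] C) (comul (R := R) (A := C))).rTensor C
          ((comul (R := R) (A := C)).rTensor C (comul c))) := e2
  rw [e2']
  congr 1
  -- map (map id Δ) id (rTensor Δ (Δ c)) = rTensor assoc (rTensor D3 ...)
  have e3 : (TensorProduct.map (.id : C →ₗ[R] C) (comul (R := R) (A := C))).rTensor C
        ∘ₗ (comul (R := R) (A := C)).rTensor C
      = ((TensorProduct.map (.id : C →ₗ[R] C) (comul (R := R) (A := C))) ∘ₗ
          comul).rTensor C := by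
    rw [LinearMap.rTensor_comp]
  have e3' := LinearMap.congr_fun e3 (comul c)
  simp only [LinearMap.comp_apply] at e3'
  rw [e3']
  have e4 : (TensorProduct.map (.id : C →ₗ[R] C) (comul (R := R) (A := C))) ∘ₗ comul
      = (TensorProduct.assoc R C C C).toLinearMap ∘ₗ DThree R C := by
    have : TensorProduct.map (.id : C →ₗ[R] C) (comul (R := R) (A := C))
        = (comul (R := R) (A := C)).lTensor C := rfl
    rw [this, DThree, ← LinearMap.comp_assoc]
    exact Coalgebra.coassoc.symm
  rw [e4]
  have e5 : ((TensorProduct.assoc R C C C).toLinearMap ∘ₗ DThree R C).rTensor C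
      = ((TensorProduct.assoc R C C C).toLinearMap).rTensor C ∘ₗ (DThree R C).rTensor C := by
    rw [LinearMap.rTensor_comp]
  exact LinearMap.congr_fun e5 (comul c)

theorem TL_eq : (TensorProduct.map (.id : C →ₗ[R] C) (DThree R C)).rTensor C ∘ₗ DThree R C
    = (((TensorProduct.assoc R C (C ⊗[R] C) C).toLinearMap ∘ₗ
        ((TensorProduct.assoc R C C C).toLinearMap).rTensor C)).rTensor C ∘ₗ DFive R C := by
  have e1 : (TensorProduct.map (.id : C →ₗ[R] C) (DThree R C)).rTensor C ∘ₗ DThree R C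
      = ((TensorProduct.map (.id : C →ₗ[R] C) (DThree R C)) ∘ₗ comul).rTensor C ∘ₗ comul := by
    rw [DThree, LinearMap.rTensor_comp, LinearMap.comp_assoc]
  rw [e1, FC_eq]
  have e2 : ((TensorProduct.assoc R C (C ⊗[R] C) C).toLinearMap ∘ₗ
        ((TensorProduct.assoc R C C C).toLinearMap).rTensor C ∘ₗ
        (DThree R C).rTensor C ∘ₗ comul).rTensor C
      = ((TensorProduct.assoc R C (C ⊗[R] C) C).toLinearMap).rTensor C ∘ₗ
        (((TensorProduct.assoc R C C C).toLinearMap).rTensor C).rTensor C ∘ₗ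
        ((DThree R C).rTensor C).rTensor C ∘ₗ ((comul (R := R) (A := C)).rTensor C) := by
    rw [← LinearMap.rTensor_comp, ← LinearMap.rTensor_comp, ← LinearMap.rTensor_comp]
  rw [e2]
  have e3 : (((TensorProduct.assoc R C (C ⊗[R] C) C).toLinearMap ∘ₗ
        ((TensorProduct.assoc R C C C).toLinearMap).rTensor C)).rTensor C
      = ((TensorProduct.assoc R C (C ⊗[R] C) C).toLinearMap).rTensor C ∘ₗ
        (((TensorProduct.assoc R C C C).toLinearMap).rTensor C).rTensor C := by
    rw [LinearMap.rTensor_comp]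
  rw [e3, DFive]
  simp only [LinearMap.comp_assoc]
  rfl

/-- Generic-slot version of `gOne`. -/
noncomputable def gGen (X : Type) [AddCommGroup X] [Module R X] :
    (C ⊗[R] X) ⊗[R] C →ₗ[R] X ⊗[R] H :=
  (TensorProduct.map (.id : X →ₗ[R] X) (mul' R H)) ∘ₗ
    (TensorProduct.assoc R X H H).toLinearMap ∘ₗ
    (TensorProduct.map
      ((TensorProduct.comm R H X).toLinearMap ∘ₗ TensorProduct.map (Kmap J) (.id : X →ₗ[R] X))
      J.toLinearMap)

/-- The comultiplied version of the `gOne` tail. -/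
noncomputable def GammaTwo : ((C ⊗[R] C) ⊗[R] C) ⊗[R] (C ⊗[R] C) →ₗ[R] C ⊗[R] (H ⊗[R] H) :=
  TensorProduct.map (.id : C →ₗ[R] C) (mul' R (H ⊗[R] H)) ∘ₗ
  TensorProduct.map (.id : C →ₗ[R] C)
    (TensorProduct.map
      (TensorProduct.map (Kmap J) (Kmap J) ∘ₗ (TensorProduct.comm R C C).toLinearMap)
      (TensorProduct.map J.toLinearMap J.toLinearMap)) ∘ₗ
  (TensorProduct.assoc R C (C ⊗[R] C) (C ⊗[R] C)).toLinearMap ∘ₗ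
  TensorProduct.map (TensorProduct.comm R (C ⊗[R] C) C).toLinearMap
    (.id : C ⊗[R] C →ₗ[R] C ⊗[R] C)

theorem comul_J_apply (x : C) :
    comul (R := R) (J.toLinearMap x) = TensorProduct.map J.toLinearMap J.toLinearMap (comul x) := by
  have := (CoalgHomClass.map_comp_comul_apply (R := R) J x).symm
  simp only [CoalgHom.toLinearMap_eq_coe] at this ⊢
  exact this

theorem comul_Kmap_apply (x : C) :
    comul (R := R) (Kmap J x)
      = TensorProduct.map (Kmap J) (Kmap J) ((TensorProduct.comm R C C) (comul x)) := by
  have h1 := LinearMap.congr_fun (comul_antipode (R := R) (H := H)) (J.toLinearMap x)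
  simp only [LinearMap.comp_apply, LinearEquiv.coe_coe] at h1
  have h3 := LinearMap.congr_fun
    (TensorProduct.map_comp_comm_eq J.toLinearMap J.toLinearMap) (comul (R := R) x)
  simp only [LinearMap.comp_apply, LinearEquiv.coe_coe] at h3
  have h4 := LinearMap.congr_fun
    (TensorProduct.map_comp S S J.toLinearMap J.toLinearMap)
    ((TensorProduct.comm R C C) (comul (R := R) x))
  simp only [LinearMap.comp_apply] at h4
  show comul (R := R) (S (J.toLinearMap x)) = _
  rw [h1, comul_J_apply, ← h3]
  exact h4.symm

theorem ER_eq : TensorProduct.map (.id : C →ₗ[R] C) (comul (R := R) (A := H)) ∘ₗ gOne J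
    = GammaTwo J ∘ₗ TensorProduct.map ((comul (R := R) (A := C)).rTensor C) comul := by
  apply TensorProduct.ext_threefold
  intro a b c
  simp only [gOne, GammaTwo, LinearMap.comp_apply, TensorProduct.map_tmul,
    LinearEquiv.coe_coe, TensorProduct.comm_tmul, TensorProduct.assoc_tmul,
    LinearMap.mul'_apply, LinearMap.id_coe, id_eq, LinearMap.rTensor_tmul,
    CoalgHom.coe_toLinearMap]
  rw [Bialgebra.comul_mul, comul_Kmap_apply J a, comul_J_apply J c]

theorem g_natural {Y : Type} [AddCommGroup Y] [Module R Y] (f : C →ₗ[R] Y) :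
    TensorProduct.map f (.id : H →ₗ[R] H) ∘ₗ gOne J
      = gGen J Y ∘ₗ (TensorProduct.map (.id : C →ₗ[R] C) f).rTensor C := by
  apply TensorProduct.ext_threefold
  intro a b c
  simp [gOne, gGen]

theorem FIN_one : (TensorProduct.assoc R C H H).toLinearMap ∘ₗ gGen J (C ⊗[R] H) ∘ₗ
      (TensorProduct.map (.id : C →ₗ[R] C) (gOne J)).rTensor C ∘ₗ
      (((TensorProduct.assoc R C (C ⊗[R] C) C).toLinearMap ∘ₗ
        ((TensorProduct.assoc R C C C).toLinearMap).rTensor C)).rTensor C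
    = GammaTwo J ∘ₗ (TensorProduct.assoc R ((C ⊗[R] C) ⊗[R] C) C C).toLinearMap := by
  apply TensorProduct.ext_fourfold
  intro w x y z
  induction w using TensorProduct.induction_on with
  | zero => simp
  | add u v hu hv =>
      simp only [TensorProduct.add_tmul, map_add] at hu hv ⊢
      rw [hu, hv]
  | tmul a b =>
      simp [gOne, gGen, GammaTwo, Algebra.TensorProduct.tmul_mul_tmul, mul_assoc]

theorem innerCoaction_coassoc :
    (TensorProduct.assoc R C H H).toLinearMap ∘ₗ
      (TensorProduct.map (innerCoaction R C H J) (LinearMap.id : H →ₗ[R] H)) ∘ₗ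
      innerCoaction R C H J
    = (TensorProduct.map (LinearMap.id : C →ₗ[R] C) (Coalgebra.comul (R := R))) ∘ₗ
      innerCoaction R C H J := by
  ext c
  simp only [LinearMap.comp_apply, innerCoaction_eq, LinearEquiv.coe_coe]
  -- LHS
  have s1 := LinearMap.congr_fun (g_natural J (gOne J ∘ₗ DThree R C)) (DThree R C c)
  simp only [LinearMap.comp_apply] at s1
  rw [s1]
  have s2 : (TensorProduct.map (.id : C →ₗ[R] C) (gOne J ∘ₗ DThree R C)).rTensor C
      = ((TensorProduct.map (.id : C →ₗ[R] C) (gOne J)).rTensor C) ∘ₗ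
        ((TensorProduct.map (.id : C →ₗ[R] C) (DThree R C)).rTensor C) := by
    rw [← LinearMap.rTensor_comp, ← TensorProduct.map_comp]
    simp
  have s2' := LinearMap.congr_fun s2 (DThree R C c)
  simp only [LinearMap.comp_apply] at s2'
  rw [s2']
  have s3 := LinearMap.congr_fun (TL_eq (R := R) (C := C)) c
  simp only [LinearMap.comp_apply] at s3
  rw [s3]
  -- RHS
  have r1 := LinearMap.congr_fun (ER_eq J) (DThree R C c)
  simp only [LinearMap.comp_apply] at r1
  rw [r1]
  have r2 : TensorProduct.map ((comul (R := R) (A := C)).rTensor C) comul ∘ₗ DThree R C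
      = TensorProduct.map (DThree R C) (comul (R := R) (A := C)) ∘ₗ comul := by
    have hr : (comul (R := R) (A := C)).rTensor C
        = TensorProduct.map comul (.id : C →ₗ[R] C) := rfl
    rw [DThree, ← LinearMap.comp_assoc, hr, ← TensorProduct.map_comp]
    rw [LinearMap.comp_id]
  have r2' := LinearMap.congr_fun r2 c
  simp only [LinearMap.comp_apply] at r2'
  rw [r2']
  have r3 := LinearMap.congr_fun (TR_eq (R := R) (C := C)) c
  simp only [LinearMap.comp_apply] at r3
  rw [r3]
  have fin := LinearMap.congr_fun (FIN_one J) (DFive R C c)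
  simp only [LinearMap.comp_apply, LinearEquiv.coe_coe] at fin
  exact fin

theorem cancel_JK : mul' R H ∘ₗ TensorProduct.map J.toLinearMap (Kmap J) ∘ₗ comul
    = Algebra.linearMap R H ∘ₗ counit := by
  ext m
  simp only [LinearMap.comp_apply]
  have e1 : TensorProduct.map J.toLinearMap (Kmap J)
      = (HopfAlgebra.antipode (R := R) (A := H)).lTensor H ∘ₗ
        TensorProduct.map J.toLinearMap J.toLinearMap := by
    rw [LinearMap.lTensor, ← TensorProduct.map_comp]
    simp [Kmap]
  rw [e1, LinearMap.comp_apply, ← comul_J_apply,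
    HopfAlgebra.mul_antipode_lTensor_comul_apply]
  simp [counit_J]

/-- `ω₀ (x ⊗ (y ⊗ z)) = (J x * K y) ⊗ z`. -/
noncomputable def omegaZero : C ⊗[R] (C ⊗[R] C) →ₗ[R] H ⊗[R] C :=
  TensorProduct.map (mul' R H) (.id : C →ₗ[R] C) ∘ₗ
    (TensorProduct.assoc R H H C).symm.toLinearMap ∘ₗ
    TensorProduct.map J.toLinearMap (TensorProduct.map (Kmap J) (.id : C →ₗ[R] C))

theorem omega_comul : omegaZero J ∘ₗ (comul (R := R) (A := C)).lTensor C ∘ₗ comul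
    = TensorProduct.mk R H C 1 ∘ₗ (TensorProduct.lid R C).toLinearMap ∘ₗ
      (counit (R := R) (A := C)).rTensor C ∘ₗ comul := by
  have PL : omegaZero J ∘ₗ (TensorProduct.assoc R C C C).toLinearMap
      = TensorProduct.map (mul' R H ∘ₗ TensorProduct.map J.toLinearMap (Kmap J))
          (.id : C →ₗ[R] C) := by
    apply TensorProduct.ext_threefold
    intro x y z
    simp [omegaZero]
  ext m
  simp only [LinearMap.comp_apply, LinearEquiv.coe_coe]
  rw [← Coalgebra.coassoc_apply]
  have e1 := LinearMap.congr_fun PL ((comul (R := R) (A := C)).rTensor C (comul m))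
  simp only [LinearMap.comp_apply, LinearEquiv.coe_coe] at e1
  rw [e1]
  have e2 : TensorProduct.map (mul' R H ∘ₗ TensorProduct.map J.toLinearMap (Kmap J))
        (.id : C →ₗ[R] C) ∘ₗ (comul (R := R) (A := C)).rTensor C
      = ((mul' R H ∘ₗ TensorProduct.map J.toLinearMap (Kmap J)) ∘ₗ comul).rTensor C := by
    rw [LinearMap.rTensor_comp]
    rfl
  have e2' := LinearMap.congr_fun e2 (comul m)
  simp only [LinearMap.comp_apply] at e2'
  rw [e2']
  have e3 : (mul' R H ∘ₗ TensorProduct.map J.toLinearMap (Kmap J)) ∘ₗ comul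
      = Algebra.linearMap R H ∘ₗ counit := by
    rw [LinearMap.comp_assoc, cancel_JK]
  rw [e3]
  have e4 : (Algebra.linearMap R H ∘ₗ (counit (R := R) (A := C))).rTensor C
      = (Algebra.linearMap R H).rTensor C ∘ₗ (counit (R := R) (A := C)).rTensor C := by
    rw [LinearMap.rTensor_comp]
  have e4' := LinearMap.congr_fun e4 (comul m)
  simp only [LinearMap.comp_apply] at e4'
  rw [e4', Coalgebra.rTensor_counit_comul]
  simp

/-- `ζ ((h ⊗ m) ⊗ h') = m ⊗ (h * h')`. -/
noncomputable def zeta : (H ⊗[R] C) ⊗[R] H →ₗ[R] C ⊗[R] H :=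
  TensorProduct.map (.id : C →ₗ[R] C) (mul' R H) ∘ₗ
    (TensorProduct.assoc R C H H).toLinearMap ∘ₗ
    TensorProduct.map (TensorProduct.comm R H C).toLinearMap (.id : H →ₗ[R] H)

/-- `κ₀ (t ⊗ ((y₁ ⊗ y₂) ⊗ y₃)) = y₂ ⊗ (J t * K y₁ * J y₃)`. -/
noncomputable def kappaZero : C ⊗[R] ((C ⊗[R] C) ⊗[R] C) →ₗ[R] C ⊗[R] H :=
  zeta (R := R) (C := C) (H := H) ∘ₗ TensorProduct.map (omegaZero J) J.toLinearMap ∘ₗ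
    (TensorProduct.assoc R C (C ⊗[R] C) C).symm.toLinearMap

theorem kappa_comul : kappaZero J ∘ₗ (DThree R C).lTensor C ∘ₗ comul
    = TensorProduct.map (.id : C →ₗ[R] C) J.toLinearMap ∘ₗ comul := by
  ext m
  simp only [LinearMap.comp_apply, kappaZero, LinearEquiv.coe_coe]
  -- step 1 : assoc.symm (lTensor D3 (Δ m)) = rTensor (lTensor Δ) (D3 m)
  have s0 : (DThree R C).lTensor C (comul m)
      = ((comul (R := R) (A := C)).rTensor C).lTensor C
          ((comul (R := R) (A := C)).lTensor C (comul m)) := by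
    have : (DThree R C).lTensor C = ((comul (R := R) (A := C)).rTensor C).lTensor C ∘ₗ
        (comul (R := R) (A := C)).lTensor C := by rw [← LinearMap.lTensor_comp]; rfl
    exact LinearMap.congr_fun this (comul m)
  rw [s0]
  have s1 := TensorProduct.map_map_assoc_symm (.id : C →ₗ[R] C)
    (comul (R := R) (A := C)) (.id : C →ₗ[R] C)
    ((comul (R := R) (A := C)).lTensor C (comul m))
  have s1' : (TensorProduct.assoc R C (C ⊗[R] C) C).symm
        (((comul (R := R) (A := C)).rTensor C).lTensor C
          ((comul (R := R) (A := C)).lTensor C (comul m)))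
      = ((comul (R := R) (A := C)).lTensor C).rTensor C
          ((TensorProduct.assoc R C C C).symm
            ((comul (R := R) (A := C)).lTensor C (comul m))) := s1.symm
  rw [s1', Coalgebra.coassoc_symm_apply]
  -- step 2 : fuse maps on the first slot
  have s2 : TensorProduct.map (omegaZero J) J.toLinearMap ∘ₗ
        ((comul (R := R) (A := C)).lTensor C).rTensor C ∘ₗ
        (comul (R := R) (A := C)).rTensor C
      = TensorProduct.map
          (omegaZero J ∘ₗ (comul (R := R) (A := C)).lTensor C ∘ₗ comul) J.toLinearMap := by
    rw [LinearMap.rTensor, LinearMap.rTensor, ← TensorProduct.map_comp,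
      ← TensorProduct.map_comp]
    simp [LinearMap.comp_assoc]
  have s2' := LinearMap.congr_fun s2 (comul m)
  simp only [LinearMap.comp_apply] at s2'
  rw [s2', omega_comul]
  -- step 3 : final pure computation
  have s3 : zeta (R := R) (C := C) (H := H) ∘ₗ TensorProduct.map
        (TensorProduct.mk R H C 1 ∘ₗ (TensorProduct.lid R C).toLinearMap ∘ₗ
          (counit (R := R) (A := C)).rTensor C ∘ₗ comul) J.toLinearMap
      = TensorProduct.map ((TensorProduct.lid R C).toLinearMap ∘ₗ
          (counit (R := R) (A := C)).rTensor C ∘ₗ comul) J.toLinearMap := by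
    apply TensorProduct.ext'
    intro t y
    simp [zeta]
  have s3' := LinearMap.congr_fun s3 (comul m)
  simp only [LinearMap.comp_apply] at s3'
  rw [s3']
  have s5 : (TensorProduct.lid R C).toLinearMap ∘ₗ
      (counit (R := R) (A := C)).rTensor C ∘ₗ comul = (LinearMap.id : C →ₗ[R] C) := by
    ext y
    simp [Coalgebra.rTensor_counit_comul]
  rw [s5]

/-- `PhiTwo ((c₁ ⊗ c₂) ⊗ (v ⊗ h)) = (c₂ ⊗ v) ⊗ (K c₁ * h)`. -/
noncomputable def PhiTwo : (C ⊗[R] C) ⊗[R] (C ⊗[R] H) →ₗ[R] (C ⊗[R] C) ⊗[R] H :=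
  TensorProduct.map (.id : C ⊗[R] C →ₗ[R] C ⊗[R] C) (mul' R H) ∘ₗ
    (TensorProduct.tensorTensorTensorComm R C H C H).toLinearMap ∘ₗ
    TensorProduct.map
      ((TensorProduct.comm R H C).toLinearMap ∘ₗ TensorProduct.map (Kmap J) (.id : C →ₗ[R] C))
      (.id : C ⊗[R] H →ₗ[R] C ⊗[R] H)

theorem FIN_three :
    (TensorProduct.map (.id : C ⊗[R] C →ₗ[R] C ⊗[R] C) (mul' R H)) ∘ₗ
      (TensorProduct.tensorTensorTensorComm R C H C H).toLinearMap ∘ₗ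
      TensorProduct.map (gOne J) (gOne J)
    = PhiTwo J ∘ₗ TensorProduct.map (.id : C ⊗[R] C →ₗ[R] C ⊗[R] C) (kappaZero J) ∘ₗ
      (TensorProduct.assoc R (C ⊗[R] C) C ((C ⊗[R] C) ⊗[R] C)).toLinearMap := by
  apply TensorProduct.ext_fourfold'
  intro w x y z
  induction w using TensorProduct.induction_on with
  | zero => simp
  | add u v hu hv =>
      simp only [TensorProduct.add_tmul, map_add] at hu hv ⊢
      rw [hu, hv]
  | tmul a b =>
      induction y using TensorProduct.induction_on with
      | zero => simp
      | add u v hu hv =>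
          simp only [TensorProduct.add_tmul, TensorProduct.tmul_add, map_add] at hu hv ⊢
          rw [hu, hv]
      | tmul y1 y2 =>
          simp [gOne, PhiTwo, kappaZero, zeta, omegaZero, mul_assoc]

theorem FIN_three' :
    PhiTwo J ∘ₗ
      TensorProduct.map (.id : C ⊗[R] C →ₗ[R] C ⊗[R] C)
        (TensorProduct.map (.id : C →ₗ[R] C) J.toLinearMap) ∘ₗ
      (TensorProduct.assoc R (C ⊗[R] C) C C).toLinearMap
    = gGen J (C ⊗[R] C) ∘ₗ ((TensorProduct.assoc R C C C).toLinearMap).rTensor C := by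
  apply TensorProduct.ext_fourfold
  intro a b t d
  simp [PhiTwo, gGen]

theorem m_four : TensorProduct.map (comul (R := R) (A := C)) (comul (R := R) (A := C)) ∘ₗ comul
    = (TensorProduct.assoc R (C ⊗[R] C) C C).toLinearMap ∘ₗ
      (DThree R C).rTensor C ∘ₗ comul := by
  rw [mov_gen (comul (R := R) (A := C))]
  have h : (TensorProduct.map (comul (R := R) (A := C)) (.id : C →ₗ[R] C)).rTensor C
        ∘ₗ DThree R C
      = (DThree R C).rTensor C ∘ₗ comul := by
    rw [DThree, ← LinearMap.comp_assoc, ← LinearMap.rTensor_comp]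
    rfl
  rw [h]

theorem innerCoaction_coflat_mul :
    (TensorProduct.map (LinearMap.id : (C ⊗[R] C) →ₗ[R] C ⊗[R] C) (LinearMap.mul' R H)) ∘ₗ
      (TensorProduct.tensorTensorTensorComm R C H C H).toLinearMap ∘ₗ
      (TensorProduct.map (innerCoaction R C H J) (innerCoaction R C H J)) ∘ₗ Coalgebra.comul
    = (TensorProduct.map (Coalgebra.comul (R := R)) (LinearMap.id : H →ₗ[R] H)) ∘ₗ
      innerCoaction R C H J := by
  ext c
  simp only [LinearMap.comp_apply, innerCoaction_eq, LinearEquiv.coe_coe]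
  -- LHS : expand map δ δ
  have l1 : TensorProduct.map (gOne J ∘ₗ DThree R C) (gOne J ∘ₗ DThree R C)
      = TensorProduct.map (gOne J) (gOne J) ∘ₗ
        TensorProduct.map (DThree R C) (DThree R C) := by
    rw [← TensorProduct.map_comp]
  have l1' := LinearMap.congr_fun l1 (comul c)
  simp only [LinearMap.comp_apply] at l1'
  rw [l1']
  have l2 := LinearMap.congr_fun (FIN_three J)
    (TensorProduct.map (DThree R C) (DThree R C) (comul c))
  simp only [LinearMap.comp_apply, LinearEquiv.coe_coe] at l2
  rw [l2]
  -- l3 : assoc (map D3 D3 (Δ c)) = map id (lTensor D3) (map Δ Δ (Δ c))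
  have l3a : TensorProduct.map (DThree R C) (DThree R C) (comul c)
      = (DThree R C).lTensor ((C ⊗[R] C) ⊗[R] C) ((DThree R C).rTensor C (comul c)) := by
    have : TensorProduct.map (DThree R C) (DThree R C)
        = (DThree R C).lTensor ((C ⊗[R] C) ⊗[R] C) ∘ₗ (DThree R C).rTensor C := by
      rw [LinearMap.lTensor_comp_rTensor]
    exact LinearMap.congr_fun this (comul c)
  rw [l3a]
  have cv : ((DThree R C).lTensor ((C ⊗[R] C) ⊗[R] C))
        ((DThree R C).rTensor C (comul c))
      = (TensorProduct.map (.id : (C ⊗[R] C) ⊗[R] C →ₗ[R] (C ⊗[R] C) ⊗[R] C) (DThree R C))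
        ((DThree R C).rTensor C (comul c)) := rfl
  rw [cv]
  have l3b := TensorProduct.map_map_assoc (.id : C ⊗[R] C →ₗ[R] C ⊗[R] C)
    (.id : C →ₗ[R] C) (DThree R C) ((DThree R C).rTensor C (comul c))
  simp only [TensorProduct.map_id] at l3b
  rw [← l3b]
  have m4' := LinearMap.congr_fun (m_four (R := R) (C := C)) c
  simp only [LinearMap.comp_apply, LinearEquiv.coe_coe] at m4'
  rw [← m4']
  -- l4 : kappa collapse
  have A1 : TensorProduct.map (.id : C ⊗[R] C →ₗ[R] C ⊗[R] C) ((DThree R C).lTensor C) ∘ₗ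
        TensorProduct.map (comul (R := R) (A := C)) (comul (R := R) (A := C))
      = TensorProduct.map (comul (R := R) (A := C))
          ((DThree R C).lTensor C ∘ₗ comul) := by
    rw [← TensorProduct.map_comp]; simp
  have A2 : TensorProduct.map (.id : C ⊗[R] C →ₗ[R] C ⊗[R] C) (kappaZero J) ∘ₗ
        TensorProduct.map (comul (R := R) (A := C)) ((DThree R C).lTensor C ∘ₗ comul)
      = TensorProduct.map (comul (R := R) (A := C))
          (kappaZero J ∘ₗ (DThree R C).lTensor C ∘ₗ comul) := by
    rw [← TensorProduct.map_comp]; simp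
  have A3 : TensorProduct.map (.id : C ⊗[R] C →ₗ[R] C ⊗[R] C)
        (TensorProduct.map (.id : C →ₗ[R] C) J.toLinearMap) ∘ₗ
        TensorProduct.map (comul (R := R) (A := C)) (comul (R := R) (A := C))
      = TensorProduct.map (comul (R := R) (A := C))
          (TensorProduct.map (.id : C →ₗ[R] C) J.toLinearMap ∘ₗ comul) := by
    rw [← TensorProduct.map_comp]; simp
  have l4 : TensorProduct.map (.id : C ⊗[R] C →ₗ[R] C ⊗[R] C) (kappaZero J) ∘ₗ
        TensorProduct.map (.id : C ⊗[R] C →ₗ[R] C ⊗[R] C) ((DThree R C).lTensor C) ∘ₗ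
        TensorProduct.map (comul (R := R) (A := C)) (comul (R := R) (A := C))
      = TensorProduct.map (.id : C ⊗[R] C →ₗ[R] C ⊗[R] C)
          (TensorProduct.map (.id : C →ₗ[R] C) J.toLinearMap) ∘ₗ
        TensorProduct.map (comul (R := R) (A := C)) (comul (R := R) (A := C)) := by
    rw [A1, A2, kappa_comul, A3]
  have cv2 : TensorProduct.map (.id : C ⊗[R] C →ₗ[R] C ⊗[R] C)
        (TensorProduct.map (.id : C →ₗ[R] C) (DThree R C))
        (TensorProduct.map (comul (R := R) (A := C)) (comul (R := R) (A := C)) (comul c))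
      = TensorProduct.map (.id : C ⊗[R] C →ₗ[R] C ⊗[R] C) ((DThree R C).lTensor C)
        (TensorProduct.map (comul (R := R) (A := C)) (comul (R := R) (A := C)) (comul c)) := rfl
  rw [cv2]
  have l4' := LinearMap.congr_fun l4 (comul c)
  simp only [LinearMap.comp_apply] at l4'
  rw [l4']
  -- l5 : final pure lemma
  rw [m4']
  have l5 := LinearMap.congr_fun (FIN_three' J) ((DThree R C).rTensor C (comul c))
  simp only [LinearMap.comp_apply, LinearEquiv.coe_coe] at l5
  rw [l5]
  -- RHS
  have r1 := LinearMap.congr_fun (g_natural J (comul (R := R) (A := C))) (DThree R C c)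
  simp only [LinearMap.comp_apply] at r1
  rw [r1]
  congr 1
  -- (map id Δ).rTensor C (D3 c) = (assoc).rTensor C ((D3).rTensor C (Δ c))
  have h2 : TensorProduct.map (.id : C →ₗ[R] C) (comul (R := R) (A := C))
      = (comul (R := R) (A := C)).lTensor C := rfl
  have h1 : TensorProduct.map (.id : C →ₗ[R] C) (comul (R := R) (A := C)) ∘ₗ comul
      = (TensorProduct.assoc R C C C).toLinearMap ∘ₗ DThree R C := by
    rw [h2, DThree]
    exact Coalgebra.coassoc.symm
  have r2 : (TensorProduct.map (.id : C →ₗ[R] C) (comul (R := R) (A := C))).rTensor C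
        ∘ₗ DThree R C
      = ((TensorProduct.assoc R C C C).toLinearMap).rTensor C ∘ₗ
        (DThree R C).rTensor C ∘ₗ comul := by
    calc (TensorProduct.map (.id : C →ₗ[R] C) (comul (R := R) (A := C))).rTensor C
          ∘ₗ DThree R C
        = ((TensorProduct.map (.id : C →ₗ[R] C) (comul (R := R) (A := C)))
            ∘ₗ comul).rTensor C ∘ₗ comul := by
          rw [DThree, ← LinearMap.comp_assoc, ← LinearMap.rTensor_comp]
      _ = ((TensorProduct.assoc R C C C).toLinearMap ∘ₗ DThree R C).rTensor C ∘ₗ comul := by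
          rw [h1]
      _ = ((TensorProduct.assoc R C C C).toLinearMap).rTensor C ∘ₗ
          (DThree R C).rTensor C ∘ₗ comul := by
          rw [LinearMap.rTensor_comp, LinearMap.comp_assoc]
  have r2' := LinearMap.congr_fun r2 c
  simp only [LinearMap.comp_apply] at r2'
  exact r2'.symm

theorem innerCoaction_counitary :
    (TensorProduct.rid R C).toLinearMap ∘ₗ
      (TensorProduct.map (LinearMap.id : C →ₗ[R] C) (Coalgebra.counit (R := R))) ∘ₗ
      innerCoaction R C H J = LinearMap.id := by
  set G1 : C ⊗[R] C →ₗ[R] C :=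
    (TensorProduct.lid R C).toLinearMap ∘ₗ
      TensorProduct.map (counit (R := R) (A := C)) (.id : C →ₗ[R] C) with hG1
  set G2 : C ⊗[R] C →ₗ[R] C :=
    (TensorProduct.rid R C).toLinearMap ∘ₗ
      TensorProduct.map (.id : C →ₗ[R] C) (counit (R := R) (A := C)) with hG2
  have Ecu : (TensorProduct.rid R C).toLinearMap ∘ₗ
        (TensorProduct.map (LinearMap.id : C →ₗ[R] C) (counit (R := R) (A := H))) ∘ₗ gOne J
      = G2 ∘ₗ TensorProduct.map G1 (.id : C →ₗ[R] C) := by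
    apply TensorProduct.ext_threefold
    intro a b c
    simp [gOne, hG1, hG2, TensorProduct.rid_tmul, TensorProduct.lid_tmul,
      Bialgebra.counit_mul, counit_Kmap, counit_J, TensorProduct.smul_tmul,
      smul_smul, mul_comm]
  ext c
  rw [innerCoaction_eq]
  simp only [LinearMap.comp_apply, LinearMap.id_apply]
  have e1 := LinearMap.congr_fun Ecu (DThree R C c)
  simp only [LinearMap.comp_apply] at e1
  rw [e1]
  have fuse : TensorProduct.map G1 (.id : C →ₗ[R] C) ∘ₗ
      (comul (R := R) (A := C)).rTensor C = TensorProduct.map (G1 ∘ₗ comul) (.id : C →ₗ[R] C) := by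
    rw [LinearMap.rTensor, ← TensorProduct.map_comp]; simp
  have G1comul : G1 ∘ₗ (comul (R := R) (A := C)) = .id := by
    ext x
    have : TensorProduct.map (counit (R := R) (A := C)) (.id : C →ₗ[R] C) (comul x)
        = (counit (R := R) (A := C)).rTensor C (comul x) := rfl
    simp [hG1, this, Coalgebra.rTensor_counit_comul]
  have e2 := LinearMap.congr_fun fuse (comul c)
  simp only [LinearMap.comp_apply] at e2
  simp only [DThree, LinearMap.comp_apply]
  rw [e2, G1comul]
  have : TensorProduct.map (.id : C →ₗ[R] C) (counit (R := R) (A := C)) (comul c)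
      = (counit (R := R) (A := C)).lTensor C (comul c) := rfl
  simp [hG2, this, Coalgebra.lTensor_counit_comul]

theorem innerCoaction_coflat_counit :
    (LinearMap.mul' R R) ∘ₗ
      (TensorProduct.map (Coalgebra.counit (R := R)) (Coalgebra.counit (R := R))) ∘ₗ
      innerCoaction R C H J = Coalgebra.counit := by
  have Ecc : (mul' R R) ∘ₗ
        (TensorProduct.map (counit (R := R) (A := C)) (counit (R := R) (A := H))) ∘ₗ gOne J
      = mul' R R ∘ₗ TensorProduct.map
          (mul' R R ∘ₗ TensorProduct.map (counit (R := R) (A := C)) (counit (R := R) (A := C)))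
          (counit (R := R) (A := C)) := by
    apply TensorProduct.ext_threefold
    intro a b c
    simp [gOne, Bialgebra.counit_mul, counit_Kmap, counit_J]
    ring
  have Ecc2 : mul' R R ∘ₗ TensorProduct.map (counit (R := R) (A := C))
      (counit (R := R) (A := C)) ∘ₗ (comul (R := R) (A := C)) = counit := by
    ext x
    have hsplit : TensorProduct.map (counit (R := R) (A := C)) (counit (R := R) (A := C))
        = TensorProduct.map (counit (R := R) (A := C)) (.id : R →ₗ[R] R) ∘ₗ
          (counit (R := R) (A := C)).lTensor C := by
      rw [LinearMap.lTensor, ← TensorProduct.map_comp]; simp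
    simp only [LinearMap.comp_apply, hsplit, Coalgebra.lTensor_counit_comul]
    simp
  ext c
  rw [innerCoaction_eq]
  simp only [LinearMap.comp_apply]
  have e1 := LinearMap.congr_fun Ecc (DThree R C c)
  simp only [LinearMap.comp_apply] at e1
  rw [e1]
  have fuse : TensorProduct.map
        (mul' R R ∘ₗ TensorProduct.map (counit (R := R) (A := C)) (counit (R := R) (A := C)))
        (counit (R := R) (A := C)) ∘ₗ (comul (R := R) (A := C)).rTensor C
      = TensorProduct.map
        (mul' R R ∘ₗ TensorProduct.map (counit (R := R) (A := C)) (counit (R := R) (A := C))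
          ∘ₗ comul) (counit (R := R) (A := C)) := by
    rw [LinearMap.rTensor, ← TensorProduct.map_comp]
    simp [LinearMap.comp_assoc]
  have e2 := LinearMap.congr_fun fuse (comul c)
  simp only [LinearMap.comp_apply] at e2
  simp only [DThree, LinearMap.comp_apply]
  rw [e2, Ecc2]
  have efin := LinearMap.congr_fun Ecc2 c
  simp only [LinearMap.comp_apply] at efin
  exact efin

end Coaction

/-- the inner coaction associated to a coalgebra homomorphism `J : C → H`
is a coflat Hopf coaction of `H` on `C`. -/
theorem innerCoaction_isCoflatCoaction (R C H : Type) [CommRing R]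
    [AddCommGroup C] [Module R C] [Coalgebra R C] [Ring H] [HopfAlgebra R H]
    (J : C →ₗc[R] H) :
    IsCoflatCoaction R C H (innerCoaction R C H J) :=
  { coassoc := innerCoaction_coassoc J
    counitary := innerCoaction_counitary J
    coflat_mul := innerCoaction_coflat_mul J
    coflat_counit := innerCoaction_coflat_counit J }
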